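/- Let p be an ultrafilter on ℕ which is ω*-discrete: for every function f from ℕ to the subspace ω* of nonprincipal ultrafilters on ℕ, there is A ∈ p such that f '' A is a discrete subspace. Then p is βℕ-discrete: for every function g : ℕ → Ultrafilter ℕ there is A ∈ p such that g '' A is a discrete subspace of the space of ultrafilters on ℕ. -/

import Mathlib

open Set

lemma discrete_of_sep {X : Type*} [TopologicalSpace X] {S : Set X}
    (h : ∀ x ∈ S, ∃ U, IsOpen U ∧ U ∩ S = {x}) : DiscreteTopology ↥S := by
  refine ⟨eq_bot_of_singletons_open ?_⟩
  rintro ⟨x, hx⟩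
  obtain ⟨U, hU, hUS⟩ := h x hx
  have : {(⟨x, hx⟩ : ↥S)} = Subtype.val ⁻¹' U := by
    ext ⟨y, hy⟩
    simp only [mem_singleton_iff, Subtype.mk_eq_mk, mem_preimage]
    constructor
    · intro e
      have hxUS : x ∈ U ∩ S := by rw [hUS]; rfl
      rw [e]; exact hxUS.1
    · intro hyU; have : y ∈ U ∩ S := ⟨hyU, hy⟩
      rw [hUS] at this; exact this
  rw [this]
  exact hU.preimage continuous_subtype_val

lemma sep_of_discrete {X : Type*} [TopologicalSpace X] {S : Set X}
    (h : DiscreteTopology ↥S) : ∀ x ∈ S, ∃ U, IsOpen U ∧ U ∩ S = {x} := by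
  intro x hx
  have : IsOpen {(⟨x, hx⟩ : ↥S)} := isOpen_discrete _
  obtain ⟨U, hU, hUeq⟩ := isOpen_induced_iff.mp this
  refine ⟨U, hU, ?_⟩
  ext y
  constructor
  · rintro ⟨hyU, hyS⟩
    have : (⟨y, hyS⟩ : ↥S) ∈ Subtype.val ⁻¹' U := hyU
    rw [hUeq] at this
    simpa using congrArg Subtype.val this
  · intro e
    rw [mem_singleton_iff] at e; subst e
    have : (⟨y, hx⟩ : ↥S) ∈ Subtype.val ⁻¹' U := by rw [hUeq]; rfl
    exact ⟨this, hx⟩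

/-- The set of nonprincipal ultrafilters on `ℕ` (the Stone–Čech remainder `ω*`). -/
def omegaStar : Set (Ultrafilter ℕ) := {u : Ultrafilter ℕ | ∀ n : ℕ, u ≠ pure n}

/-- Any `ω*`-discrete ultrafilter on `ℕ` is `βℕ`-discrete. -/
theorem betaOmega_discrete_of_omegaStar_discrete (p : Ultrafilter ℕ)
    (h : ∀ f : ℕ → ↥omegaStar, ∃ A ∈ p, DiscreteTopology ↥(f '' A)) :
    ∀ g : ℕ → Ultrafilter ℕ, ∃ A ∈ p, DiscreteTopology ↥(g '' A) := by
  classical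
  intro g
  set B : Set ℕ := {n | ∃ m, g n = pure m} with hB
  rcases p.mem_or_compl_mem B with hBp | hBp
  · -- principal values: all isolated points
    refine ⟨B, hBp, discrete_of_sep ?_⟩
    rintro x ⟨n, hn, rfl⟩
    obtain ⟨m, hm⟩ := hn
    refine ⟨{u : Ultrafilter ℕ | {m} ∈ u}, ultrafilter_isOpen_basic _, ?_⟩
    ext y
    constructor
    · rintro ⟨hyU, k, hk, rfl⟩
      obtain ⟨m', hm'⟩ := hk
      rw [hm'] at hyU ⊢
      rw [hm]
      have : m' ∈ ({m} : Set ℕ) := hyU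
      simp_all
    · intro e
      rw [Set.mem_singleton_iff] at e
      subst e
      refine ⟨?_, n, ⟨m, hm⟩, rfl⟩
      rw [hm]
      exact rfl
  · -- nonprincipal on a p-large set
    have hhyp : (Filter.hyperfilter ℕ : Ultrafilter ℕ) ∈ omegaStar := by
      simp only [omegaStar, Set.mem_setOf_eq]
      intro n hn
      exact Set.Finite.notMem_hyperfilter (Set.finite_singleton n)
        (by rw [hn]; exact Set.mem_singleton n)
    set f : ℕ → ↥omegaStar := fun n =>
      if hn : g n ∈ omegaStar then ⟨g n, hn⟩ else ⟨_, hhyp⟩ with hf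
    obtain ⟨A, hAp, hAd⟩ := h f
    refine ⟨A ∩ Bᶜ, Filter.inter_mem hAp hBp, discrete_of_sep ?_⟩
    rintro x ⟨n, ⟨hnA, hnB⟩, rfl⟩
    have hgn : g n ∈ omegaStar := by
      intro m hm
      exact hnB ⟨m, hm⟩
    have hfn : f n = ⟨g n, hgn⟩ := by rw [hf]; simp [hgn]
    have hfx : (⟨g n, hgn⟩ : ↥omegaStar) ∈ f '' A := ⟨n, hnA, hfn⟩
    obtain ⟨U, hU, hUS⟩ := sep_of_discrete hAd _ hfx
    obtain ⟨V, hV, hVU⟩ := isOpen_induced_iff.mp hU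
    refine ⟨V, hV, ?_⟩
    ext y
    constructor
    · rintro ⟨hyV, k, ⟨hkA, hkB⟩, rfl⟩
      have hgk : g k ∈ omegaStar := fun m hm => hkB ⟨m, hm⟩
      have hfk : f k = ⟨g k, hgk⟩ := by rw [hf]; simp [hgk]
      have h1 : (⟨g k, hgk⟩ : ↥omegaStar) ∈ U ∩ (f '' A) := by
        refine ⟨?_, k, hkA, hfk⟩
        rw [← hVU]; exact hyV
      rw [hUS] at h1
      have := congrArg Subtype.val h1
      simpa using this
    · intro e
      rw [Set.mem_singleton_iff] at e
      subst e
      refine ⟨?_, n, ⟨hnA, hnB⟩, rfl⟩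
      have : (⟨g n, hgn⟩ : ↥omegaStar) ∈ U := by
        have h2 : (⟨g n, hgn⟩ : ↥omegaStar) ∈ U ∩ (f '' A) := by
          rw [hUS]; rfl
        exact h2.1
      rw [← hVU] at this
      exact this
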